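/- Let j be a translational covariant discrete vector field on the one-dimensional discrete torus ZMod N. Define C(η) := (1/N) · ∑_{x ∈ ZMod N} j_η(x, x+1) and h(η) := ∑_{x=1}^{N−1} (x/N) · j_η(x̄, x̄+1), where x̄ denotes the class of the integer x in ZMod N. Then C is translational invariant, and for every configuration η and every x ∈ ZMod N one has j_η(x, x+1) = τ_{x+1}h(η) − τ_x h(η) + C(η). -/

import Mathlib

theorem stmt_0 {N : ℕ} [NeZero N] (hN : 2 ≤ N) {S : Type*}
    (j : (ZMod N → S) → ZMod N → ℝ)
    (hcov : ∀ (η : ZMod N → S) (z x : ZMod N), j (fun w => η (w - z)) (x + z) = j η x) :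
    let C : (ZMod N → S) → ℝ := fun η => (1 / (N : ℝ)) * ∑ x : ZMod N, j η x
    let h : (ZMod N → S) → ℝ :=
      fun η => ∑ k ∈ Finset.Icc 1 (N - 1), ((k : ℝ) / N) * j η ((k : ZMod N))
    (∀ (η : ZMod N → S) (z : ZMod N), C (fun w => η (w - z)) = C η) ∧
    (∀ (η : ZMod N → S) (x : ZMod N),
      j η x = h (fun w => η (w + (x + 1))) - h (fun w => η (w + x)) + C η) := by
  intro C h
  have hNR : (N : ℝ) ≠ 0 := Nat.cast_ne_zero.mpr (NeZero.ne N)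
  -- shift covariance
  have hshift : ∀ (η : ZMod N → S) (x k : ZMod N),
      j (fun w => η (w + x)) k = j η (k + x) := by
    intro η x k
    have := hcov η (-x) (k + x)
    simpa [sub_neg_eq_add] using this
  -- sum over range N equals sum over ZMod N
  have hsum : ∀ g : ZMod N → ℝ,
      ∑ k ∈ Finset.range N, g ((k : ZMod N)) = ∑ y : ZMod N, g y := by
    intro g
    refine Finset.sum_bij' (fun k _ => ((k : ZMod N))) (fun y _ => y.val)
      (fun a ha => Finset.mem_univ _) (fun y _ => Finset.mem_range.mpr (ZMod.val_lt y))
      (fun a ha => ZMod.val_cast_of_lt (Finset.mem_range.mp ha))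
      (fun y _ => ZMod.natCast_rightInverse y) (fun a ha => rfl)
  -- C is translation invariant
  have hC : ∀ (η : ZMod N → S) (z : ZMod N), C (fun w => η (w - z)) = C η := by
    intro η z
    simp only [C]
    congr 1
    have key : ∀ x : ZMod N, j (fun w => η (w - z)) x = j η (x - z) := by
      intro x
      have := hcov η z (x - z)
      simpa using this
    rw [Finset.sum_congr rfl (fun x _ => key x)]
    exact Finset.sum_equiv (Equiv.subRight z) (by simp) (by simp)
  refine ⟨hC, ?_⟩
  intro η x
  set F : ℕ → ℝ := fun k => j η ((k : ZMod N) + x) with hFdef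
  have hrange : Finset.range N = insert 0 (Finset.Icc 1 (N - 1)) := by
    ext k
    simp only [Finset.mem_range, Finset.mem_insert, Finset.mem_Icc]
    omega
  have h0notin : (0 : ℕ) ∉ Finset.Icc 1 (N - 1) := by simp
  -- rewrite h applied to shifted configurations
  have h1 : h (fun w => η (w + x)) = ∑ k ∈ Finset.range N, ((k : ℝ) / N) * F k := by
    simp only [h]
    rw [hrange, Finset.sum_insert h0notin]
    simp only [Nat.cast_zero, zero_div, zero_mul, zero_add]
    refine Finset.sum_congr rfl fun k _ => ?_
    rw [hshift]
  have h2 : h (fun w => η (w + (x + 1))) =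
      ∑ k ∈ Finset.range N, ((k : ℝ) / N) * F (k + 1) := by
    simp only [h]
    rw [hrange, Finset.sum_insert h0notin]
    simp only [Nat.cast_zero, zero_div, zero_mul, zero_add]
    refine Finset.sum_congr rfl fun k _ => ?_
    rw [hshift]
    simp only [hFdef]
    congr 1
    push_cast
    ring
  have hF0 : F 0 = j η x := by simp [hFdef]
  have hFN : F N = j η x := by simp [hFdef]
  have h3 : ∑ k ∈ Finset.range N, F k = ∑ y : ZMod N, j η y := by
    rw [hsum (fun y => j η (y + x))]
    exact Finset.sum_equiv (Equiv.addRight x) (by simp) (by simp)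
  -- telescoping computations
  have key1 : ∑ k ∈ Finset.range N, ((k : ℝ) / N) * F (k + 1)
      = (∑ k ∈ Finset.range N, (((k : ℝ) + 1) / N) * F (k + 1))
        - (1 / N) * ∑ k ∈ Finset.range N, F (k + 1) := by
    rw [Finset.mul_sum, ← Finset.sum_sub_distrib]
    refine Finset.sum_congr rfl fun k _ => ?_
    ring
  have key2 : ∑ k ∈ Finset.range N, (((k : ℝ) + 1) / N) * F (k + 1)
      = (∑ k ∈ Finset.range N, ((k : ℝ) / N) * F k) + j η x := by
    have := Finset.sum_range_succ' (fun m : ℕ => ((m : ℝ) / N) * F m) N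
    have h' := Finset.sum_range_succ (fun m : ℕ => ((m : ℝ) / N) * F m) N
    rw [h'] at this
    push_cast at this ⊢
    rw [div_self hNR] at this
    have : ∑ k ∈ Finset.range N, (((k : ℝ) + 1) / N) * F (k + 1)
        = ∑ k ∈ Finset.range N, ((k : ℝ) / N) * F k + 1 * F N := by
      have := this
      push_cast at this
      simp only [zero_div, zero_mul, add_zero] at this
      linarith [this]
    rw [this, hFN]; ring
  have key3 : ∑ k ∈ Finset.range N, F (k + 1) = ∑ y : ZMod N, j η y := by
    have := Finset.sum_range_succ' F N
    rw [Finset.sum_range_succ F N] at this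
    have : ∑ k ∈ Finset.range N, F (k + 1) = ∑ k ∈ Finset.range N, F k := by
      rw [hF0, ← hFN] at this; linarith
    rw [this, h3]
  rw [h1, h2, key1, key2, key3]
  simp only [C]
  ring
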